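/- Let n ≥ 2 and let P be the n×n real matrix whose first column is (1 − n(n+1)/2, −1, 0, …, 0)ᵀ and whose (i,j) entry for j ≥ 2 equals 1/((i + j − 1)(i + j)). Then det P = 0 and the rank of P equals n − 1. -/

import Mathlib

open Polynomial Finset Matrix MeasureTheory intervalIntegral


theorem fd_lemma : ∀ (N : ℕ) (p : Polynomial ℝ), p.natDegree < N →
    ∑ k ∈ Finset.range (N+1), (-1:ℝ)^k * (N.choose k) * p.eval (k:ℝ) = 0 := by
  intro N
  induction N with
  | zero => intro p hp; omega
  | succ N ih =>
    intro p hp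
    set q : Polynomial ℝ := p - p.comp (X + 1) with hq
    have hqeval : ∀ x : ℝ, q.eval x = p.eval x - p.eval (x + 1) := by
      intro x; simp [hq, eval_comp]
    have key : ∑ k ∈ Finset.range (N+2), (-1:ℝ)^k * ((N+1).choose k) * p.eval (k:ℝ)
        = ∑ k ∈ Finset.range (N+1), (-1:ℝ)^k * (N.choose k) * q.eval (k:ℝ) := by
      have e1 : ∑ k ∈ Finset.range (N+2), (-1:ℝ)^k * ((N+1).choose k) * p.eval (k:ℝ)
          = (∑ k ∈ Finset.range (N+1), (-1:ℝ)^(k+1) * ((N+1).choose (k+1)) * p.eval ((k:ℝ)+1))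
            + p.eval 0 := by
        rw [Finset.sum_range_succ' (fun k => (-1:ℝ)^k * ((N+1).choose k) * p.eval (k:ℝ)) (N+1)]
        simp [Nat.cast_add_one]
      have e2 : ∀ k : ℕ, (-1:ℝ)^(k+1) * ((N+1).choose (k+1)) * p.eval ((k:ℝ)+1)
          = -((-1:ℝ)^k * (N.choose k) * p.eval ((k:ℝ)+1))
            - (-1:ℝ)^k * (N.choose (k+1)) * p.eval ((k:ℝ)+1) := by
        intro k; rw [Nat.choose_succ_succ]; push_cast; ring
      have e3 : ∑ k ∈ Finset.range (N+1), (-1:ℝ)^k * (N.choose k) * p.eval (k:ℝ)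
          = (∑ k ∈ Finset.range (N+1), (-1:ℝ)^(k+1) * (N.choose (k+1)) * p.eval ((k:ℝ)+1))
            + p.eval 0 := by
        rw [Finset.sum_range_succ' (fun k => (-1:ℝ)^k * (N.choose k) * p.eval (k:ℝ)) N]
        rw [Finset.sum_range_succ (fun k => (-1:ℝ)^(k+1) * (N.choose (k+1)) * p.eval ((k:ℝ)+1)) N]
        simp [Nat.cast_add_one]
      simp only [e1, e2, Finset.sum_sub_distrib, Finset.sum_neg_distrib]
      have e4 : ∀ k : ℕ, (-1:ℝ)^k * (N.choose k) * q.eval (k:ℝ)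
          = (-1:ℝ)^k * (N.choose k) * p.eval (k:ℝ) - (-1:ℝ)^k * (N.choose k) * p.eval ((k:ℝ)+1) := by
        intro k; rw [hqeval]; ring
      simp only [e4, Finset.sum_sub_distrib]
      rw [e3]
      have : ∑ k ∈ Finset.range (N+1), (-1:ℝ)^(k+1) * (N.choose (k+1)) * p.eval ((k:ℝ)+1)
          = -∑ k ∈ Finset.range (N+1), (-1:ℝ)^k * (N.choose (k+1)) * p.eval ((k:ℝ)+1) := by
        rw [← Finset.sum_neg_distrib]; congr 1; ext k; ring
      rw [this]; ring
    rw [key]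
    by_cases hq0 : q = 0
    · simp [hq0]
    · apply ih
      have hp0 : p ≠ 0 := by rintro rfl; simp [hq] at hq0
      have h1 : (X + 1 : ℝ[X]) = X + C 1 := by simp
      have hnd : (X + 1 : ℝ[X]).natDegree = 1 := by rw [h1]; exact natDegree_X_add_C 1
      have hlc : (p.comp (X+1)).leadingCoeff = p.leadingCoeff := by
        rw [Polynomial.leadingCoeff_comp (by rw [hnd]; norm_num), h1, leadingCoeff_X_add_C]
        simp
      have hne : p.comp (X+1) ≠ 0 := by
        intro h
        apply hp0
        have := hlc; rw [h] at this; simp at this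
        exact leadingCoeff_eq_zero.mp this.symm
      have hdeg2 : (p.comp (X+1)).degree = p.degree := by
        rw [degree_eq_natDegree hne, degree_eq_natDegree hp0, Polynomial.natDegree_comp, hnd,
          mul_one]
      have hdeg : q.degree < p.degree := by
        apply Polynomial.degree_sub_lt hdeg2.symm hp0 hlc.symm
      have := Polynomial.natDegree_lt_natDegree hq0 hdeg
      omega
theorem prod_Icc_shift (i : ℕ) : ∀ n : ℕ, ∏ m ∈ Finset.Icc 2 (n+1), (i+m) = Nat.ascFactorial (i+2) n := by
  intro n
  induction n with
  | zero => simp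
  | succ n ih =>
    rw [show n+1+1 = n+2 from rfl, Finset.prod_Icc_succ_top (by omega : 2 ≤ n+1+1), ih,
      Nat.ascFactorial_succ]
    ring

theorem nat_ident (n i : ℕ) (hn : 1 ≤ n) :
    (i+1) * Nat.choose n (i+1) * Nat.choose (n+i+1) (i+1) * Nat.factorial n
      = n * Nat.choose (n-1) i * Nat.ascFactorial (i+2) n := by
  have h1 : n * Nat.choose (n-1) i = Nat.choose n (i+1) * (i+1) := by
    have := Nat.add_one_mul_choose_eq (n-1) i
    rwa [Nat.sub_add_cancel hn] at this
  apply Nat.eq_of_mul_eq_mul_right (Nat.factorial_pos (i+1))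
  have h2 : Nat.ascFactorial (i+2) n * Nat.factorial (i+1) = Nat.factorial (n+i+1) := by
    have := Nat.factorial_mul_ascFactorial (i+1) n
    rw [mul_comm] at this
    rw [show i+1+1 = i+2 from rfl] at this
    rw [this]; congr 1; omega
  have h3 : Nat.choose (n+i+1) (i+1) * Nat.factorial (i+1) * Nat.factorial n = Nat.factorial (n+i+1) := by
    have := Nat.choose_mul_factorial_mul_factorial (n := n+i+1) (k := i+1) (by omega)
    rwa [show n+i+1-(i+1) = n by omega] at this
  calc (i+1) * Nat.choose n (i+1) * Nat.choose (n+i+1) (i+1) * Nat.factorial n * Nat.factorial (i+1)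
      = (i+1) * Nat.choose n (i+1) * (Nat.choose (n+i+1) (i+1) * Nat.factorial (i+1) * Nat.factorial n) := by ring
    _ = (Nat.choose n (i+1) * (i+1)) * Nat.factorial (n+i+1) := by rw [h3]; ring
    _ = (n * Nat.choose (n-1) i) * Nat.factorial (n+i+1) := by rw [h1]
    _ = n * Nat.choose (n-1) i * (Nat.ascFactorial (i+2) n * Nat.factorial (i+1)) := by rw [h2]
    _ = n * Nat.choose (n-1) i * Nat.ascFactorial (i+2) n * Nat.factorial (i+1) := by ring
theorem col_identity (n j : ℕ) (hn : 2 ≤ n) (hj1 : 1 ≤ j) (hj2 : j ≤ n - 1) :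
    ∑ i ∈ Finset.range n, ((-1:ℝ)^i * (i+1) * (n.choose (i+1)) * ((n+i+1).choose (i+1)))
        / (((i+j+1:ℕ):ℝ) * ((i+j+2:ℕ):ℝ)) = 0 := by
  set S : Finset ℕ := ((Finset.Icc 2 (n+1)).erase (j+1)).erase (j+2) with hS
  set p : ℝ[X] := ∏ m ∈ S, (X + C (m:ℝ)) with hp
  have hmem2 : (j+2) ∈ (Finset.Icc 2 (n+1)).erase (j+1) := by
    rw [Finset.mem_erase, Finset.mem_Icc]; omega
  have hmem1 : (j+1) ∈ Finset.Icc 2 (n+1) := by rw [Finset.mem_Icc]; omega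
  have hpeval : ∀ i : ℕ, p.eval (i:ℝ) = ∏ m ∈ S, ((i:ℝ) + (m:ℝ)) := by
    intro i; rw [hp, eval_prod]; simp
  have hprod : ∀ i : ℕ, p.eval (i:ℝ) * (((i+j+1:ℕ):ℝ) * ((i+j+2:ℕ):ℝ))
      = ((Nat.ascFactorial (i+2) n : ℕ) : ℝ) := by
    intro i
    have e1 : ((i:ℝ) + ((j+2:ℕ):ℝ)) * ∏ m ∈ S, ((i:ℝ) + (m:ℝ))
        = ∏ m ∈ (Finset.Icc 2 (n+1)).erase (j+1), ((i:ℝ) + (m:ℝ)) :=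
      Finset.mul_prod_erase _ (fun m : ℕ => (i:ℝ) + (m:ℝ)) hmem2
    have e2 : ((i:ℝ) + ((j+1:ℕ):ℝ)) * ∏ m ∈ (Finset.Icc 2 (n+1)).erase (j+1), ((i:ℝ) + (m:ℝ))
        = ∏ m ∈ Finset.Icc 2 (n+1), ((i:ℝ) + (m:ℝ)) :=
      Finset.mul_prod_erase _ (fun m : ℕ => (i:ℝ) + (m:ℝ)) hmem1
    have e3 : ∏ m ∈ Finset.Icc 2 (n+1), ((i:ℝ) + (m:ℝ)) = ((Nat.ascFactorial (i+2) n : ℕ):ℝ) := by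
      rw [← prod_Icc_shift i n]; push_cast; rfl
    rw [hpeval, ← e3, ← e2, ← e1]
    push_cast
    ring
  have hterm : ∀ i : ℕ, ((-1:ℝ)^i * (i+1) * (n.choose (i+1)) * ((n+i+1).choose (i+1)))
        / (((i+j+1:ℕ):ℝ) * ((i+j+2:ℕ):ℝ))
      = (n:ℝ)/(Nat.factorial n : ℝ) * ((-1:ℝ)^i * ((n-1).choose i) * p.eval (i:ℝ)) := by
    intro i
    have hD : (((i+j+1:ℕ):ℝ) * ((i+j+2:ℕ):ℝ)) ≠ 0 := by positivity
    have hF : (Nat.factorial n : ℝ) ≠ 0 := by positivity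
    rw [div_eq_iff hD]
    have key : ((i+1) * Nat.choose n (i+1) * Nat.choose (n+i+1) (i+1) * Nat.factorial n : ℝ)
        = (n : ℝ) * ((n-1).choose i : ℝ) * ((Nat.ascFactorial (i+2) n : ℕ) : ℝ) := by
      have := nat_ident n i (by omega)
      exact_mod_cast congrArg (Nat.cast : ℕ → ℝ) this
    have expand : (n:ℝ)/(Nat.factorial n : ℝ) * ((-1:ℝ)^i * ((n-1).choose i) * p.eval (i:ℝ))
          * (((i+j+1:ℕ):ℝ) * ((i+j+2:ℕ):ℝ))
        = (-1:ℝ)^i * ((n:ℝ) * ((n-1).choose i : ℝ) * (p.eval (i:ℝ) * (((i+j+1:ℕ):ℝ) * ((i+j+2:ℕ):ℝ)))) / (Nat.factorial n : ℝ) := by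
      ring
    rw [expand, hprod i, ← key]
    field_simp
  rw [Finset.sum_congr rfl (fun i _ => hterm i), ← Finset.mul_sum]
  have hdeg : p.natDegree < n - 1 := by
    have hcard : S.card = n - 2 := by
      rw [hS, Finset.card_erase_of_mem hmem2, Finset.card_erase_of_mem hmem1, Nat.card_Icc]
      omega
    have : p.natDegree = S.card := by
      rw [hp, Polynomial.natDegree_prod_of_monic S (fun m : ℕ => X + C (m:ℝ)) (fun m _ => monic_X_add_C (m:ℝ))]
      have hone : ∀ m ∈ S, (X + C (m:ℝ)).natDegree = 1 := fun m _ => Polynomial.natDegree_X_add_C _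
      rw [Finset.sum_congr rfl hone, Finset.sum_const, smul_eq_mul, mul_one]
    omega
  have := fd_lemma (n-1) p hdeg
  rw [show n-1+1 = n by omega] at this
  rw [this, mul_zero]
theorem hankel_det_ne_zero (m : ℕ) (M : Matrix (Fin m) (Fin m) ℝ)
    (hM : ∀ i j : Fin m, M i j = 1 / (((i.val+j.val+3:ℕ):ℝ) * ((i.val+j.val+4:ℕ):ℝ))) :
    M.det ≠ 0 := by
  intro hdet
  obtain ⟨v, hv0, hv⟩ := (Matrix.exists_mulVec_eq_zero_iff).mpr hdet
  -- the integral representation of entries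
  have hint : ∀ i j : Fin m, M i j
      = ∫ x in (0:ℝ)..1, x^(i.val+j.val+2) - x^(i.val+j.val+3) := by
    intro i j
    rw [intervalIntegral.integral_sub ((continuous_pow _).intervalIntegrable _ _)
      ((continuous_pow _).intervalIntegrable _ _),
      integral_pow, integral_pow, hM]
    have h3 : ((i.val+j.val+3:ℕ):ℝ) ≠ 0 := by positivity
    have h4 : ((i.val+j.val+4:ℕ):ℝ) ≠ 0 := by positivity
    push_cast at h3 h4 ⊢
    rw [one_pow, one_pow, zero_pow (by omega), zero_pow (by omega)]
    field_simp
    ring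
  -- quadratic form is zero
  have hquad : ∑ i : Fin m, ∑ j : Fin m, v i * v j * M i j = 0 := by
    have : ∀ i : Fin m, ∑ j : Fin m, v i * v j * M i j = v i * (M.mulVec v) i := by
      intro i
      rw [Matrix.mulVec, dotProduct, Finset.mul_sum]
      exact Finset.sum_congr rfl fun j _ => by ring
    rw [Finset.sum_congr rfl fun i _ => this i, hv]
    simp
  -- quadratic form as an integral
  have hq2 : ∑ i : Fin m, ∑ j : Fin m, v i * v j * M i j
      = ∫ x in (0:ℝ)..1, (∑ i : Fin m, v i * x^(i.val+1))^2 * (1-x) := by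
    have swap : ∑ i : Fin m, ∑ j : Fin m, v i * v j * M i j
        = ∫ x in (0:ℝ)..1, ∑ i : Fin m, ∑ j : Fin m, v i * v j * (x^(i.val+j.val+2) - x^(i.val+j.val+3)) := by
      rw [intervalIntegral.integral_finset_sum (f := fun i x => ∑ j : Fin m, v i * v j * (x^(i.val+j.val+2) - x^(i.val+j.val+3))) (fun i _ =>
          Continuous.intervalIntegrable (continuous_finset_sum _ fun j _ =>
            continuous_const.mul ((continuous_pow _).sub (continuous_pow _))) _ _)]
      refine Finset.sum_congr rfl fun i _ => ?_
      rw [intervalIntegral.integral_finset_sum (f := fun j x => v i * v j * (x^(i.val+j.val+2) - x^(i.val+j.val+3))) (fun j _ =>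
        Continuous.intervalIntegrable (continuous_const.mul ((continuous_pow _).sub (continuous_pow _))) _ _)]
      refine Finset.sum_congr rfl fun j _ => ?_
      rw [hint, intervalIntegral.integral_const_mul]
    rw [swap]
    apply intervalIntegral.integral_congr
    intro x _
    dsimp only
    rw [sq, Finset.sum_mul_sum, Finset.sum_mul]
    refine Finset.sum_congr rfl fun i _ => ?_
    rw [Finset.sum_mul]
    refine Finset.sum_congr rfl fun j _ => ?_
    ring
  -- the polynomial
  set f : ℝ[X] := ∑ i : Fin m, monomial (i.val+1) (v i) with hf
  set F : ℝ[X] := f^2 * (1 - X) with hF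
  have hFeval : ∀ x : ℝ, F.eval x = (∑ i : Fin m, v i * x^(i.val+1))^2 * (1-x) := by
    intro x
    rw [hF, eval_mul, eval_pow, hf, eval_finset_sum]
    simp [eval_monomial, mul_comm]
  have hfne : f ≠ 0 := by
    obtain ⟨i0, hi0⟩ := Function.ne_iff.mp hv0
    intro h
    apply hi0
    have := congrArg (fun p => Polynomial.coeff p (i0.val+1)) h
    simp only [hf, Polynomial.finset_sum_coeff, Polynomial.coeff_monomial, coeff_zero] at this
    rwa [Finset.sum_eq_single i0 (fun j _ hj => by
        rw [if_neg]; intro hc; exact hj (Fin.val_injective (by omega)))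
      (fun h => absurd (Finset.mem_univ i0) h), if_pos rfl] at this
  have hFne : F ≠ 0 := by
    apply mul_ne_zero (pow_ne_zero _ hfne)
    intro h
    have := congrArg (fun p => Polynomial.coeff p 1) h
    simp only [Polynomial.coeff_sub, Polynomial.coeff_one, Polynomial.coeff_X_one,
      Polynomial.coeff_zero] at this
    norm_num at this
  -- positivity of the integral
  have hpos : 0 < ∫ x in (0:ℝ)..1, F.eval x := by
    rw [intervalIntegral.integral_pos_iff_support_of_nonneg_ae']
    · refine ⟨one_pos, ?_⟩
      have hsub : Set.Ioc (0:ℝ) 1 \ {x | F.IsRoot x} ⊆ Function.support F.eval ∩ Set.Ioc 0 1 := by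
        rintro x ⟨hx1, hx2⟩
        exact ⟨fun h => hx2 h, hx1⟩
      have : volume (Set.Ioc (0:ℝ) 1 \ {x | F.IsRoot x}) = 1 := by
        rw [measure_diff_null ((Polynomial.finite_setOf_isRoot hFne).measure_zero _)]
        simp
      calc (0:ENNReal) < 1 := by norm_num
        _ = volume (Set.Ioc (0:ℝ) 1 \ {x | F.IsRoot x}) := this.symm
        _ ≤ volume (Function.support F.eval ∩ Set.Ioc 0 1) := measure_mono hsub
    · rw [Set.uIoc_of_le (by norm_num : (0:ℝ) ≤ 1), Filter.EventuallyLE,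
        MeasureTheory.ae_restrict_iff' measurableSet_Ioc]
      filter_upwards with x hx
      simp only [Pi.zero_apply]
      rw [hFeval]
      exact mul_nonneg (sq_nonneg _) (by linarith [hx.2])
    · exact (Polynomial.continuous F).intervalIntegrable _ _
  rw [intervalIntegral.integral_congr (fun x _ => hFeval x)] at hpos
  rw [hquad] at hq2
  rw [← hq2] at hpos
  exact lt_irrefl 0 hpos
/-- The matrix `P` with first column `(1 − n(n+1)/2, −1, 0, …, 0)ᵀ` and entries
`1/((i+j−1)(i+j))` in the remaining columns has zero determinant and rank `n − 1`. -/
theorem stmt8 (n : ℕ) (hn : 2 ≤ n)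
    (P : Matrix (Fin n) (Fin n) ℝ)
    (hP : P = Matrix.of fun i j : Fin n =>
      if j.val = 0 then
        (if i.val = 0 then 1 - (n : ℝ) * (n + 1) / 2 else if i.val = 1 then -1 else 0)
      else
        (1 : ℝ) / (((i.val + j.val + 1 : ℕ) : ℝ) * ((i.val + j.val + 2 : ℕ) : ℝ))) :
    P.det = 0 ∧ P.rank = n - 1 := by
  -- the left null vector
  set bb : ℕ → ℝ := fun k => (-1:ℝ)^k * ((k:ℝ)+1) * (n.choose (k+1)) * ((n+k+1).choose (k+1))
    with hbb
  set b : Fin n → ℝ := fun i => bb i.val with hb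
  have hbb0 : bb 0 = (n:ℝ) * ((n+1:ℕ):ℝ) := by
    simp [hbb, Nat.choose_one_right]
  have hbne : b ≠ 0 := by
    intro h
    have h0 : b ⟨0, by omega⟩ = 0 := by rw [h]; rfl
    rw [hb] at h0
    simp only [hbb0] at h0
    have : (0:ℝ) < (n:ℝ) * ((n+1:ℕ):ℝ) := by positivity
    rw [h0] at this; exact lt_irrefl 0 this
  -- column sums vanish
  have hcol : ∀ j : Fin n, ∑ i : Fin n, P i j * b i = 0 := by
    intro j
    by_cases hj : j.val = 0
    · -- first column
      have hsum : ∑ i : Fin n, P i j * b i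
          = ∑ k ∈ Finset.range n,
              (if k = 0 then 1 - (n : ℝ) * (n + 1) / 2 else if k = 1 then -1 else 0) * bb k := by
        rw [← Fin.sum_univ_eq_sum_range]
        refine Finset.sum_congr rfl fun i _ => ?_
        rw [hP, hb]
        simp [hj]
      rw [hsum, ← Finset.sum_subset (Finset.range_subset_range.mpr hn)
        (fun k _ hk => by
          rw [Finset.mem_range, not_lt] at hk
          rw [if_neg (by omega), if_neg (by omega), zero_mul])]
      rw [Finset.sum_range_succ, Finset.sum_range_one]
      simp only [if_pos rfl, if_neg one_ne_zero, if_pos rfl]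
      rw [hbb0, hbb]
      simp only [pow_one, Nat.choose_one_right]
      rw [show (1:ℕ)+1 = 2 from rfl, Nat.cast_choose_two, Nat.cast_choose_two]
      push_cast
      ring
    · -- other columns
      have hj1 : 1 ≤ j.val := by omega
      have hj2 : j.val ≤ n - 1 := by omega
      have hsum : ∑ i : Fin n, P i j * b i
          = ∑ k ∈ Finset.range n, ((-1:ℝ)^k * ((k:ℝ)+1) * (n.choose (k+1)) * ((n+k+1).choose (k+1)))
              / (((k+j.val+1:ℕ):ℝ) * ((k+j.val+2:ℕ):ℝ)) := by
        rw [← Fin.sum_univ_eq_sum_range (fun k =>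
          ((-1:ℝ)^k * ((k:ℝ)+1) * (n.choose (k+1)) * ((n+k+1).choose (k+1)))
              / (((k+j.val+1:ℕ):ℝ) * ((k+j.val+2:ℕ):ℝ)))]
        refine Finset.sum_congr rfl fun i _ => ?_
        rw [hP, hb, hbb]
        simp only [Matrix.of_apply, if_neg hj]
        ring
      rw [hsum]
      exact col_identity n j.val hn hj1 hj2
  -- determinant is zero
  have hdet : P.det = 0 := by
    rw [← Matrix.det_transpose]
    rw [← Matrix.exists_mulVec_eq_zero_iff]
    refine ⟨b, hbne, ?_⟩
    funext j
    rw [Matrix.mulVec, dotProduct]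
    simpa [Matrix.transpose_apply, mul_comm] using hcol j
  refine ⟨hdet, ?_⟩
  -- rank upper bound
  have hrank_le : P.rank ≤ n - 1 := by
    obtain ⟨v, hv0, hv⟩ := Matrix.exists_mulVec_eq_zero_iff.mpr hdet
    have hker : 0 < Module.finrank ℝ (LinearMap.ker P.mulVecLin) := by
      rw [Module.finrank_pos_iff]
      refine nontrivial_of_ne ⟨v, by simpa [Matrix.mulVecLin] using hv⟩ 0 ?_
      simp [Subtype.ext_iff, hv0]
    have hrn := LinearMap.finrank_range_add_finrank_ker P.mulVecLin
    rw [Module.finrank_pi] at hrn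
    have : P.rank = Module.finrank ℝ (LinearMap.range P.mulVecLin) := rfl
    rw [Fintype.card_fin] at hrn
    omega
  -- rank lower bound
  have hrank_ge : n - 1 ≤ P.rank := by
    set emb : Fin (n-1) → Fin n := fun k => ⟨k.val+1, by omega⟩ with hemb
    set Q : Matrix (Fin (n-1)) (Fin (n-1)) ℝ := P.submatrix emb emb with hQ
    have hQent : ∀ i j : Fin (n-1), Q i j
        = 1 / (((i.val+j.val+3:ℕ):ℝ) * ((i.val+j.val+4:ℕ):ℝ)) := by
      intro i j
      rw [hQ, Matrix.submatrix_apply, hP]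
      simp only [Matrix.of_apply, hemb, if_neg (by omega : ¬ (j.val + 1 = 0))]
      rw [show i.val+1+(j.val+1)+1 = i.val+j.val+3 by omega,
        show i.val+1+(j.val+1)+2 = i.val+j.val+4 by omega]
    have hQdet := hankel_det_ne_zero (n-1) Q hQent
    set c : Fin (n-1) → (Fin n → ℝ) := fun j => Pᵀ (emb j) with hc
    have hli : LinearIndependent ℝ c := by
      rw [Fintype.linearIndependent_iff]
      intro g hg
      have hQg : Q.mulVec g = 0 := by
        funext i
        have := congrFun hg (emb i)
        simp only [Finset.sum_apply, Pi.smul_apply, Pi.zero_apply, hc,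
          Matrix.transpose_apply, smul_eq_mul] at this
        rw [Matrix.mulVec, dotProduct, Pi.zero_apply, ← this]
        refine Finset.sum_congr rfl fun j _ => ?_
        rw [hQ, Matrix.submatrix_apply]
        ring
      intro i
      by_contra hgi
      exact hQdet (Matrix.exists_mulVec_eq_zero_iff.mp
        ⟨g, fun h => hgi (by rw [h]; rfl), hQg⟩)
    have hspan : Submodule.span ℝ (Set.range c) ≤ Submodule.span ℝ (Set.range Pᵀ) := by
      apply Submodule.span_mono
      rintro _ ⟨j, rfl⟩
      exact ⟨emb j, rfl⟩
    calc n - 1 = Fintype.card (Fin (n-1)) := (Fintype.card_fin _).symm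
      _ = Module.finrank ℝ (Submodule.span ℝ (Set.range c)) := (finrank_span_eq_card hli).symm
      _ ≤ Module.finrank ℝ (Submodule.span ℝ (Set.range Pᵀ)) := Submodule.finrank_mono hspan
      _ = P.rank := (Matrix.rank_eq_finrank_span_cols P).symm
  omega
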